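/- arXiv:2601.07406 — 2 statements merged into one kernel-verified Lean document; each statement's English description precedes it below -/
import Mathlib

section
/- For every odd natural number n and every even d with 0 ≤ d < n and 2d ≠ n − 1, there exists a d-regular cograph on n vertices. -/
open SimpleGraph

/-- The join (product) of two graphs: disjoint union plus all cross edges. -/
def gJoin {α β : Type*} (G : SimpleGraph α) (H : SimpleGraph β) : SimpleGraph (α ⊕ β) where
  Adj u v := match u, v with
    | Sum.inl a, Sum.inl b => G.Adj a b
    | Sum.inr a, Sum.inr b => H.Adj a b
    | _, _ => True
  symm := ⟨by rintro (a|a) (b|b) h <;> simp_all <;> exact h.symm⟩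
  loopless := ⟨by
    rintro (a|a) h
    · exact G.irrefl h
    · exact H.irrefl h⟩

/-- `H` is contained in `G` as a (not necessarily induced) subgraph. -/
def Contains {β α : Type*} (H : SimpleGraph β) (G : SimpleGraph α) : Prop :=
  ∃ f : H →g G, Function.Injective f

/-- The complete bipartite graph `K_{s,t}`. -/
def KBip (s t : ℕ) : SimpleGraph (Fin s ⊕ Fin t) := completeBipartiteGraph (Fin s) (Fin t)

/-- A cograph: a graph with no induced path on four vertices. -/
def IsCograph {α : Type*} (G : SimpleGraph α) : Prop :=
  IsEmpty (pathGraph 4 ↪g G)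

namespace RegCographAux

/-- Existence of a `d`-regular cograph on `t` vertices. -/
def P (d t : ℕ) : Prop :=
  ∃ G : SimpleGraph (Fin t), IsCograph G ∧ ∀ v : Fin t, Nat.card (G.neighborSet v) = d

lemma isCograph_bot {α : Type*} : IsCograph (⊥ : SimpleGraph α) := by
  constructor
  intro f
  have h01 : (pathGraph 4).Adj 0 1 := by rw [pathGraph_adj]; decide
  exact f.map_adj_iff.mpr h01

lemma isCograph_compl {α : Type*} {G : SimpleGraph α} (h : IsCograph G) : IsCograph Gᶜ := by
  constructor
  intro f
  let e : Fin 4 → Fin 4 := ![1, 3, 0, 2]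
  have hinj : Function.Injective e := by decide
  have key : ∀ a b : Fin 4,
      ((e a ≠ e b ∧ ¬ (pathGraph 4).Adj (e a) (e b)) ↔ (pathGraph 4).Adj a b) := by
    simp only [pathGraph_adj]
    decide
  have hGadj : ∀ u v : α, G.Adj u v ↔ u ≠ v ∧ ¬ Gᶜ.Adj u v := by
    intro u v
    constructor
    · intro hadj
      exact ⟨hadj.ne, fun hc => (compl_adj G u v).mp hc |>.2 hadj⟩
    · rintro ⟨hne, hnc⟩
      by_contra h'
      exact hnc ((compl_adj G u v).mpr ⟨hne, h'⟩)
  refine h.false ⟨⟨fun i => f (e i), f.injective.comp hinj⟩, ?_⟩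
  intro a b
  simp only [Function.Embedding.coeFn_mk]
  rw [hGadj]
  rw [f.injective.ne_iff, f.map_adj_iff]
  exact key a b

lemma ncard_compl_neighborSet {t : ℕ} (G : SimpleGraph (Fin t)) (v : Fin t) :
    Nat.card (Gᶜ.neighborSet v) = t - 1 - Nat.card (G.neighborSet v) := by
  classical
  rw [Nat.card_eq_fintype_card, Nat.card_eq_fintype_card, card_neighborSet_eq_degree,
    card_neighborSet_eq_degree, degree_compl, Fintype.card_fin]

lemma P_compl {d t : ℕ} (h : P d t) : P (t - 1 - d) t := by
  obtain ⟨G, hG, hGd⟩ := h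
  exact ⟨Gᶜ, isCograph_compl hG, fun v => by rw [ncard_compl_neighborSet, hGd]⟩

/-- The disjoint union of two graphs. -/
def gSum {α β : Type*} (G : SimpleGraph α) (H : SimpleGraph β) : SimpleGraph (α ⊕ β) where
  Adj u v := match u, v with
    | Sum.inl a, Sum.inl b => G.Adj a b
    | Sum.inr a, Sum.inr b => H.Adj a b
    | _, _ => False
  symm := ⟨by rintro (a|a) (b|b) h <;> simp_all <;> exact h.symm⟩
  loopless := ⟨by
    rintro (a|a) h
    · exact G.irrefl h
    · exact H.irrefl h⟩

variable {α β : Type*} {G : SimpleGraph α} {H : SimpleGraph β}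

lemma gSum_inl_inl {a b : α} : (gSum G H).Adj (Sum.inl a) (Sum.inl b) ↔ G.Adj a b := Iff.rfl

lemma gSum_inr_inr {a b : β} : (gSum G H).Adj (Sum.inr a) (Sum.inr b) ↔ H.Adj a b := Iff.rfl

lemma gSum_adj_left {a : α} {x : α ⊕ β} (h : (gSum G H).Adj (Sum.inl a) x) :
    ∃ b, x = Sum.inl b := by
  cases x with
  | inl b => exact ⟨b, rfl⟩
  | inr b => exact absurd h (by simp [gSum])

lemma gSum_adj_right {a : β} {x : α ⊕ β} (h : (gSum G H).Adj (Sum.inr a) x) :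
    ∃ b, x = Sum.inr b := by
  cases x with
  | inl b => exact absurd h (by simp [gSum])
  | inr b => exact ⟨b, rfl⟩

lemma isCograph_gSum (hG : IsCograph G) (hH : IsCograph H) : IsCograph (gSum G H) := by
  constructor
  intro f
  have h01 : (pathGraph 4).Adj 0 1 := by rw [pathGraph_adj]; decide
  have h12 : (pathGraph 4).Adj 1 2 := by rw [pathGraph_adj]; decide
  have h23 : (pathGraph 4).Adj 2 3 := by rw [pathGraph_adj]; decide
  have f01 := f.map_adj_iff.mpr h01
  have f12 := f.map_adj_iff.mpr h12
  have f23 := f.map_adj_iff.mpr h23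
  cases h0 : f 0 with
  | inl a =>
    rw [h0] at f01
    obtain ⟨b1, h1⟩ := gSum_adj_left f01
    rw [h1] at f12
    obtain ⟨b2, h2⟩ := gSum_adj_left f12
    rw [h2] at f23
    obtain ⟨b3, h3⟩ := gSum_adj_left f23
    have hL : ∀ i : Fin 4, ∃ x, f i = Sum.inl x := by
      intro i
      fin_cases i
      exacts [⟨a, h0⟩, ⟨b1, h1⟩, ⟨b2, h2⟩, ⟨b3, h3⟩]
    choose g hg using hL
    refine hG.false ⟨⟨g, ?_⟩, ?_⟩
    · intro i j hij
      apply f.injective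
      rw [hg i, hg j, hij]
    · intro i j
      show G.Adj (g i) (g j) ↔ (pathGraph 4).Adj i j
      rw [← gSum_inl_inl (G := G) (H := H), ← hg i, ← hg j]
      exact f.map_adj_iff
  | inr a =>
    rw [h0] at f01
    obtain ⟨b1, h1⟩ := gSum_adj_right f01
    rw [h1] at f12
    obtain ⟨b2, h2⟩ := gSum_adj_right f12
    rw [h2] at f23
    obtain ⟨b3, h3⟩ := gSum_adj_right f23
    have hL : ∀ i : Fin 4, ∃ x, f i = Sum.inr x := by
      intro i
      fin_cases i
      exacts [⟨a, h0⟩, ⟨b1, h1⟩, ⟨b2, h2⟩, ⟨b3, h3⟩]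
    choose g hg using hL
    refine hH.false ⟨⟨g, ?_⟩, ?_⟩
    · intro i j hij
      apply f.injective
      rw [hg i, hg j, hij]
    · intro i j
      show H.Adj (g i) (g j) ↔ (pathGraph 4).Adj i j
      rw [← gSum_inr_inr (G := G) (H := H), ← hg i, ← hg j]
      exact f.map_adj_iff

lemma neighborSet_gSum_inl (a : α) :
    (gSum G H).neighborSet (Sum.inl a) = Sum.inl '' (G.neighborSet a) := by
  ext x
  cases x with
  | inl b =>
    simp only [mem_neighborSet, Set.mem_image]
    constructor
    · intro h; exact ⟨b, h, rfl⟩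
    · rintro ⟨c, hc, hcb⟩
      cases Sum.inl_injective hcb
      exact hc
  | inr b =>
    simp only [mem_neighborSet, Set.mem_image]
    constructor
    · intro h; exact absurd h (by simp [gSum])
    · rintro ⟨c, _, hcb⟩; exact absurd hcb (by simp)

lemma neighborSet_gSum_inr (a : β) :
    (gSum G H).neighborSet (Sum.inr a) = Sum.inr '' (H.neighborSet a) := by
  ext x
  cases x with
  | inr b =>
    simp only [mem_neighborSet, Set.mem_image]
    constructor
    · intro h; exact ⟨b, h, rfl⟩
    · rintro ⟨c, hc, hcb⟩
      cases Sum.inr_injective hcb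
      exact hc
  | inl b =>
    simp only [mem_neighborSet, Set.mem_image]
    constructor
    · intro h; exact absurd h (by simp [gSum])
    · rintro ⟨c, _, hcb⟩; exact absurd hcb (by simp)

lemma P_add {d t1 t2 : ℕ} (h1 : P d t1) (h2 : P d t2) : P d (t1 + t2) := by
  obtain ⟨G, hG, hGd⟩ := h1
  obtain ⟨H, hH, hHd⟩ := h2
  let e : Fin (t1 + t2) ≃ Fin t1 ⊕ Fin t2 := finSumFinEquiv.symm
  refine ⟨(gSum G H).comap e.toEmbedding, ?_, ?_⟩
  · constructor
    intro f
    exact (isCograph_gSum hG hH).false ((Iso.comap e (gSum G H)).toEmbedding.comp f)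
  · intro v
    show Nat.card ((SimpleGraph.comap e (gSum G H)).neighborSet v) = d
    rw [Nat.card_congr ((Iso.comap e (gSum G H)).mapNeighborSet v), Iso.comap_apply]
    cases hv : e v with
    | inl a =>
      rw [Nat.card_coe_set_eq, neighborSet_gSum_inl,
        Set.ncard_image_of_injective _ Sum.inl_injective, ← Nat.card_coe_set_eq]
      exact hGd a
    | inr a =>
      rw [Nat.card_coe_set_eq, neighborSet_gSum_inr,
        Set.ncard_image_of_injective _ Sum.inr_injective, ← Nat.card_coe_set_eq]
      exact hHd a

lemma P_zero (t : ℕ) : P 0 t := by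
  refine ⟨⊥, isCograph_bot, fun v => ?_⟩
  simp

lemma main : ∀ N d t : ℕ, 2 * d + t ≤ N → d < t → (Even d ∨ Even t) → t ≠ 2 * d + 1 →
    P d t := by
  intro N
  induction N with
  | zero => intro d t h hdt _ _; omega
  | succ N ih =>
    intro d t hN hdt hpar hne
    by_cases hc : t ≤ 2 * d
    · -- complement case
      have hpar' : Even (t - 1 - d) ∨ Even t := by
        simp only [Nat.even_iff] at hpar ⊢
        omega
      have h1 := ih (t - 1 - d) t (by omega) (by omega) hpar' (by omega)
      have h2 := P_compl h1
      rwa [show t - 1 - (t - 1 - d) = d from by omega] at h2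
    · rcases Nat.eq_zero_or_pos d with hd0 | hd0
      · subst hd0; exact P_zero t
      · by_cases h32 : t = 3 * d + 2
        · have hde : Even d := by
            simp only [Nat.even_iff] at hpar ⊢
            omega
          have hd2 : d % 2 = 0 := Nat.even_iff.mp hde
          have p1 := ih d (d + 2) (by omega) (by omega) (Or.inl hde) (by omega)
          have p2 := ih d (2 * d) (by omega) (by omega) (Or.inl hde) (by omega)
          have h3 := P_add p1 p2
          rwa [show d + 2 + 2 * d = t from by omega] at h3
        · have hpar1 : Even d ∨ Even (d + 1) := by
            simp only [Nat.even_iff] at hpar ⊢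
            omega
          have hpar2 : Even d ∨ Even (t - (d + 1)) := by
            simp only [Nat.even_iff] at hpar ⊢
            omega
          have p1 := ih d (d + 1) (by omega) (by omega) hpar1 (by omega)
          have p2 := ih d (t - (d + 1)) (by omega) (by omega) hpar2 (by omega)
          have h3 := P_add p1 p2
          rwa [show d + 1 + (t - (d + 1)) = t from by omega] at h3

end RegCographAux

theorem regular_cograph_odd (n d : ℕ) (hn : Odd n) (hdeven : Even d) (hd : d < n)
    (hne : 2 * d ≠ n - 1) :
    ∃ G : SimpleGraph (Fin n), IsCograph G ∧ ∀ v : Fin n, Nat.card (G.neighborSet v) = d := by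
  have hne' : n ≠ 2 * d + 1 := by omega
  exact RegCographAux.main (2 * d + n) d n le_rfl hd (Or.inl hdeven) hne'
end

section
/- For any n ≥ 2, every edge-maximal K_{2,2}-free cograph G on n vertices contains a dominating vertex (a vertex adjacent to all other vertices), and the remaining graph G − v has maximum degree at most 1 (i.e., is a matching plus isolated vertices). -/
open SimpleGraph

section Aux
variable {V : Type*}

/-- Local combined characterization of being a cograph and `K_{2,2}`-free. -/
def Okay (G : SimpleGraph V) : Prop :=
  ∀ a b c d : V, G.Adj a b → G.Adj b c → G.Adj c d → a ≠ c → b ≠ d →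
    ¬ G.Adj a d ∧ (a ≠ d → G.Adj a c ∨ G.Adj b d)

/-- Induced-P4 pattern. -/
def P4pat (G : SimpleGraph V) (a b c d : V) : Prop :=
  G.Adj a b ∧ G.Adj b c ∧ G.Adj c d ∧ ¬G.Adj a c ∧ ¬G.Adj b d ∧ ¬G.Adj a d ∧
    a ≠ c ∧ b ≠ d ∧ a ≠ d

lemma okay_mk (G : SimpleGraph V) (hG : IsCograph G) (hfree : ¬ Contains (KBip 2 2) G) :
    Okay G := by
  intro a b c d hab hbc hcd hac hbd
  have hab' := hab.ne
  have hbc' := hbc.ne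
  have hcd' := hcd.ne
  have hba' := hab'.symm
  have hcb' := hbc'.symm
  have hdc' := hcd'.symm
  have hca' := hac.symm
  have hdb' := hbd.symm
  have hK : ¬ G.Adj a d := by
    intro had
    have had' := had.ne
    have hda' := had'.symm
    apply hfree
    have hinj : Function.Injective (Sum.elim ![a, c] ![b, d] : Fin 2 ⊕ Fin 2 → V) := by
      rintro (x | x) (y | y) h <;> fin_cases x <;> fin_cases y <;> simp_all
    exact ⟨⟨Sum.elim ![a, c] ![b, d], by
      rintro (x | x) (y | y) h <;>
        simp only [KBip, completeBipartiteGraph] at h <;>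
        fin_cases x <;> fin_cases y <;> simp_all <;>
        first
          | exact hab | exact had | exact hbc.symm | exact hcd
          | exact hab.symm | exact had.symm | exact hbc | exact hcd.symm⟩, hinj⟩
  refine ⟨hK, ?_⟩
  intro had
  by_contra hcon
  push_neg at hcon
  obtain ⟨h1, h2⟩ := hcon
  have hda := had.symm
  have h1' : ¬ G.Adj c a := fun h => h1 h.symm
  have h2' : ¬ G.Adj d b := fun h => h2 h.symm
  have hK' : ¬ G.Adj d a := fun h => hK h.symm
  apply hG.false
  have hinj : Function.Injective (![a, b, c, d] : Fin 4 → V) := by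
    intro x y h
    fin_cases x <;> fin_cases y <;> simp_all
  refine ⟨⟨![a, b, c, d], hinj⟩, ?_⟩
  intro x y
  simp only [Function.Embedding.coeFn_mk]
  fin_cases x <;> fin_cases y <;>
    simp_all [pathGraph_adj, G.irrefl, hab.symm, hbc.symm, hcd.symm] <;> decide

lemma free_of_okay (G : SimpleGraph V) (hok : Okay G) : ¬ Contains (KBip 2 2) G := by
  rintro ⟨f, hinj⟩
  have h02 : (KBip 2 2).Adj (Sum.inl 0) (Sum.inr 0) := by
    simp [KBip, completeBipartiteGraph]
  have h03 : (KBip 2 2).Adj (Sum.inl 0) (Sum.inr 1) := by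
    simp [KBip, completeBipartiteGraph]
  have h12 : (KBip 2 2).Adj (Sum.inl 1) (Sum.inr 0) := by
    simp [KBip, completeBipartiteGraph]
  have h13 : (KBip 2 2).Adj (Sum.inl 1) (Sum.inr 1) := by
    simp [KBip, completeBipartiteGraph]
  set a := f (Sum.inl 0)
  set b := f (Sum.inl 1)
  set c := f (Sum.inr 0)
  set d := f (Sum.inr 1)
  have hne1 : a ≠ b := fun h => by simpa using hinj h
  have hne2 : c ≠ d := fun h => by simpa using hinj h
  exact (hok a c b d (f.map_adj h02) (f.map_adj h12).symm (f.map_adj h13) hne1 hne2).1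
    (f.map_adj h03)

lemma cograph_of_okay (G : SimpleGraph V) (hok : Okay G) : IsCograph G := by
  constructor
  intro e
  have p01 : (pathGraph 4).Adj 0 1 := by rw [pathGraph_adj]; decide
  have p12 : (pathGraph 4).Adj 1 2 := by rw [pathGraph_adj]; decide
  have p23 : (pathGraph 4).Adj 2 3 := by rw [pathGraph_adj]; decide
  have n02 : ¬ (pathGraph 4).Adj 0 2 := by rw [pathGraph_adj]; decide
  have n13 : ¬ (pathGraph 4).Adj 1 3 := by rw [pathGraph_adj]; decide
  have n03 : ¬ (pathGraph 4).Adj 0 3 := by rw [pathGraph_adj]; decide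
  set a := e 0
  set b := e 1
  set c := e 2
  set d := e 3
  have hne1 : a ≠ c := fun h => absurd (e.injective h) (by decide)
  have hne2 : b ≠ d := fun h => absurd (e.injective h) (by decide)
  have hne3 : a ≠ d := fun h => absurd (e.injective h) (by decide)
  have := (hok a b c d (e.map_adj_iff.mpr p01) (e.map_adj_iff.mpr p12)
    (e.map_adj_iff.mpr p23) hne1 hne2).2 hne3
  rcases this with h | h
  · exact n02 (e.map_adj_iff.mp h)
  · exact n13 (e.map_adj_iff.mp h)

lemma okay_no_p4 {G : SimpleGraph V} (hok : Okay G) {a b c d : V}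
    (hp : P4pat G a b c d) : False := by
  obtain ⟨hab, hbc, hcd, hac, hbd, had, h1, h2, h3⟩ := hp
  rcases (hok a b c d hab hbc hcd h1 h2).2 h3 with h | h
  · exact hac h
  · exact hbd h

lemma p4_compl {G : SimpleGraph V} {a b c d : V} (hp : P4pat Gᶜ a b c d) :
    P4pat G b d a c := by
  obtain ⟨hab, hbc, hcd, hac, hbd, had, h1, h2, h3⟩ := hp
  rw [compl_adj] at hab hbc hcd
  have gac : G.Adj a c := by
    by_contra h; exact hac ((compl_adj G a c).mpr ⟨h1, h⟩)
  have gbd : G.Adj b d := by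
    by_contra h; exact hbd ((compl_adj G b d).mpr ⟨h2, h⟩)
  have gad : G.Adj a d := by
    by_contra h; exact had ((compl_adj G a d).mpr ⟨h3, h⟩)
  exact ⟨gbd, gad.symm, gac, fun h => hab.2 h.symm, fun h => hcd.2 h.symm,
    hbc.2, fun h => hab.1 h.symm, fun h => hcd.1 h.symm, hbc.1⟩

/-- The restriction of `G` to a set `s` (vertices outside `s` become isolated). -/
def res (G : SimpleGraph V) (s : Set V) : SimpleGraph V where
  Adj x y := G.Adj x y ∧ x ∈ s ∧ y ∈ s
  symm := ⟨fun x y ⟨h, hx, hy⟩ => ⟨h.symm, hy, hx⟩⟩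
  loopless := ⟨fun x h => G.irrefl h.1⟩

lemma res_adj {G : SimpleGraph V} {s : Set V} {x y : V} :
    (res G s).Adj x y ↔ G.Adj x y ∧ x ∈ s ∧ y ∈ s := Iff.rfl

/-- First step of a walk in a restricted graph. -/
lemma first_step {K : SimpleGraph V} {s : Set V} {v u : V}
    (h : (res K s).Reachable v u) (hne : v ≠ u) : ∃ x, K.Adj v x ∧ x ∈ s := by
  obtain ⟨p⟩ := h
  cases p with
  | nil => exact absurd rfl hne
  | cons h' _ => exact ⟨_, h'.1, h'.2.2⟩

/-- Walking towards `v` inside `s`: the component (in `s \ {v}`) of the start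
vertex contains a neighbor of `v`. -/
lemma toward_v {K : SimpleGraph V} {s : Set V} {v : V} :
    ∀ {x : V}, (res K s).Walk x v → x ≠ v →
      ∃ t, t ≠ v ∧ K.Adj v t ∧ t ∈ s ∧ (res K (s \ {v})).Reachable x t := by
  intro x p
  induction p with
  | nil => intro h; exact absurd rfl h
  | @cons x y v h p ih =>
    intro hxv
    by_cases hy : y = v
    · subst hy
      exact ⟨x, hxv, h.1.symm, h.2.1, Reachable.refl x⟩
    · obtain ⟨t, h1, h2, h3, h4⟩ := ih hy
      have hadj : (res K (s \ {v})).Adj x y := ⟨h.1, ⟨h.2.1, hxv⟩, ⟨h.2.2, hy⟩⟩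
      exact ⟨t, h1, h2, h3, hadj.reachable.trans h4⟩

/-- Along a walk from a neighbor of `v` to a non-neighbor of `v`, there is an
edge from a neighbor to a non-neighbor. -/
lemma cross_edge {K : SimpleGraph V} {s' : Set V} {v w : V} :
    ∀ {x : V}, (res K s').Walk x w → ¬ K.Adj v w → K.Adj v x →
      ∃ x' y', K.Adj x' y' ∧ K.Adj v x' ∧ ¬ K.Adj v y' ∧ x' ∈ s' ∧ y' ∈ s' ∧
        (res K s').Reachable y' w ∧ (res K s').Reachable x' w := by
  intro x p
  induction p with
  | nil => intro hw h; exact absurd h hw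
  | @cons x y w h p ih =>
    intro hw hvx
    by_cases hy : K.Adj v y
    · exact ih hw hy
    · exact ⟨x, y, h.1, hvx, hy, h.2.1, h.2.2, p.reachable,
        (Adj.reachable h).trans p.reachable⟩

/-- Key deletion lemma: if `G` restricted to `s` is connected, `v ∈ s` has a
non-neighbor in `s`, and deleting `v` disconnects, then there is an induced P4. -/
lemma star_lemma (K : SimpleGraph V) (s : Set V) (v : V) (hv : v ∈ s)
    (hA : ∀ a ∈ s, ∀ b ∈ s, (res K s).Reachable a b)
    (w : V) (hw : w ∈ s) (hwv : w ≠ v) (hnadj : ¬ K.Adj v w)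
    (a b : V) (ha : a ∈ s \ {v}) (hb : b ∈ s \ {v})
    (hdisc : ¬ (res K (s \ {v})).Reachable a b) :
    ∃ p q r t, P4pat K p q r t := by
  set s' := s \ {v} with hs'
  have hws' : w ∈ s' := ⟨hw, hwv⟩
  -- a vertex c₀ not reachable from w in s'
  have hc0 : ∃ c₀ ∈ s', ¬ (res K s').Reachable w c₀ := by
    by_cases h1 : (res K s').Reachable w a
    · by_cases h2 : (res K s').Reachable w b
      · exact absurd (h1.symm.trans h2) hdisc
      · exact ⟨b, hb, h2⟩
    · exact ⟨a, ha, h1⟩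
  obtain ⟨c₀, hc₀s, hc₀⟩ := hc0
  -- u : neighbor of v in c₀'s component
  obtain ⟨pw⟩ := hA c₀ hc₀s.1 v hv
  obtain ⟨u, hu1, hu2, hu3, hu4⟩ := toward_v pw hc₀s.2
  have hwu : ¬ (res K s').Reachable w u := fun h => hc₀ (h.trans hu4.symm)
  -- x : neighbor of v in w's component
  obtain ⟨pw2⟩ := hA w hw v hv
  obtain ⟨x, hx1, hx2, hx3, hx4⟩ := toward_v pw2 hwv
  -- walk from x to w inside s'
  obtain ⟨pxw⟩ := hx4.symm
  obtain ⟨x', y', he, hvx', hvy', hx's, hy's, hy'w, hx'w⟩ := cross_edge pxw hnadj hx2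
  refine ⟨y', x', v, u, he.symm, hvx'.symm, hu2, ?_, ?_, ?_, ?_, ?_, ?_⟩
  · exact fun h => hvy' h.symm
  · intro h
    exact hwu (hx'w.symm.trans (Adj.reachable ⟨h, hx's, hu3, hu1⟩))
  · intro h
    exact hwu (hy'w.symm.trans (Adj.reachable ⟨h, hy's, hu3, hu1⟩))
  · exact hy's.2
  · rintro rfl
    exact hwu hx'w.symm
  · rintro rfl
    exact hwu hy'w.symm

lemma res_pair {K : SimpleGraph V} {u v : V}
    (h : (res K ({u, v} : Set V)).Reachable u v) (hne : u ≠ v) : K.Adj u v := by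
  obtain ⟨p⟩ := h
  cases p with
  | nil => exact absurd rfl hne
  | cons h' _ =>
    rcases h'.2.2 with h2 | h2
    · exact absurd (h2 ▸ h'.1) (K.irrefl)
    · rw [Set.mem_singleton_iff] at h2
      exact h2 ▸ h'.1

/-- Seinsche's theorem: a graph whose restriction to `s` is connected and
co-connected (with `|s| ≥ 2`) contains an induced P4. -/
lemma seinsche [DecidableEq V] (G : SimpleGraph V) :
    ∀ n (s : Finset V), s.card = n → 2 ≤ n →
    (∀ a ∈ s, ∀ b ∈ s, (res G ↑s).Reachable a b) →
    (∀ a ∈ s, ∀ b ∈ s, (res Gᶜ ↑s).Reachable a b) →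
    ∃ a b c d, P4pat G a b c d := by
  intro n
  induction n using Nat.strong_induction_on with
  | _ n ih =>
    intro s hn h2 hA hB
    rcases Nat.lt_or_ge n 3 with h3 | h3
    · -- n = 2 : contradiction
      have : s.card = 2 := by omega
      obtain ⟨u, v, huv, rfl⟩ := Finset.card_eq_two.mp this
      have hu : u ∈ ({u, v} : Finset V) := by simp
      have hv : v ∈ ({u, v} : Finset V) := by simp
      have hcoe : (↑({u, v} : Finset V) : Set V) = ({u, v} : Set V) := by simp
      have hadj : G.Adj u v := res_pair (by
        have := hA u hu v hv; rwa [hcoe] at this) huv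
      have hadj' : Gᶜ.Adj u v := res_pair (by
        have := hB u hu v hv; rwa [hcoe] at this) huv
      exact absurd hadj ((compl_adj G u v).mp hadj').2
    · -- n ≥ 3 : delete a vertex
      have hpos : 0 < s.card := by omega
      obtain ⟨v, hv⟩ := Finset.card_pos.mp hpos
      set s' := s.erase v with hs'
      have hcard' : s'.card = n - 1 := by rw [hs', Finset.card_erase_of_mem hv, hn]
      have hcoe' : (↑s' : Set V) = ↑s \ {v} := by rw [hs', Finset.coe_erase]
      by_cases hsplit : (∀ a ∈ s', ∀ b ∈ s', (res G ↑s').Reachable a b) ∧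
          (∀ a ∈ s', ∀ b ∈ s', (res Gᶜ ↑s').Reachable a b)
      · refine ih (n - 1) (by omega) s' hcard' ?_ hsplit.1 hsplit.2
        omega
      · rw [not_and_or] at hsplit
        -- a vertex of s other than v
        obtain ⟨u₀, hu₀s, hu₀v⟩ := Finset.exists_mem_ne (s := s) (by omega) v
        rcases hsplit with hns | hns
        · -- G restricted to s' is disconnected
          push_neg at hns
          obtain ⟨a, ha, b, hb, hnr⟩ := hns
          -- v has a non-neighbor in s : from co-connectivity
          obtain ⟨w, hw1, hw2⟩ := first_step (hB v hv u₀ hu₀s) (Ne.symm hu₀v)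
          rw [compl_adj] at hw1
          obtain ⟨p, q, r, t, hp⟩ := star_lemma G ↑s v hv hA w hw2
            (fun h => hw1.1 h.symm) hw1.2 a b
            (hcoe' ▸ (Finset.mem_coe.mpr ha : a ∈ (↑s' : Set V)))
            (hcoe' ▸ (Finset.mem_coe.mpr hb : b ∈ (↑s' : Set V)))
            (by rw [← hcoe']; exact hnr)
          exact ⟨p, q, r, t, hp⟩
        · -- Gᶜ restricted to s' is disconnected
          push_neg at hns
          obtain ⟨a, ha, b, hb, hnr⟩ := hns
          -- v has a neighbor in s (non-neighbor in Gᶜ)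
          obtain ⟨w, hw1, hw2⟩ := first_step (hA v hv u₀ hu₀s) (Ne.symm hu₀v)
          have hwnc : ¬ Gᶜ.Adj v w := by
            rw [compl_adj]; push_neg; intro _; exact hw1
          obtain ⟨p, q, r, t, hp⟩ := star_lemma Gᶜ ↑s v hv hB w hw2 hw1.ne.symm hwnc a b
            (hcoe' ▸ (Finset.mem_coe.mpr ha : a ∈ (↑s' : Set V)))
            (hcoe' ▸ (Finset.mem_coe.mpr hb : b ∈ (↑s' : Set V)))
            (by rw [← hcoe']; exact hnr)
          exact ⟨q, t, p, r, p4_compl hp⟩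

lemma lift_walk {G : SimpleGraph V} {u : V} :
    ∀ {x y : V}, G.Walk x y → G.Reachable u x →
      (res G {z | G.Reachable u z}).Reachable x y := by
  intro x y p
  induction p with
  | nil => intro _; exact Reachable.refl _
  | @cons x z y h p ih =>
    intro hx
    have hz : G.Reachable u z := hx.trans h.reachable
    exact (Adj.reachable (⟨h, by exact hx, by exact hz⟩ : (res G _).Adj x z)).trans (ih hz)

/-- Every component of an `Okay` graph has a dominating vertex. -/
lemma compdom [Fintype V] {G : SimpleGraph V} (hok : Okay G) (u : V) :
    ∃ v, G.Reachable u v ∧ ∀ z, G.Reachable u z → z ≠ v → G.Adj v z := by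
  classical
  by_cases h2 : ∃ w, w ≠ u ∧ G.Reachable u w
  swap
  · exact ⟨u, Reachable.refl u, fun z hz hne => absurd ⟨z, hne, hz⟩ h2⟩
  obtain ⟨w₀, hw₀ne, hw₀⟩ := h2
  set C : Set V := {z | G.Reachable u z} with hCdef
  have hfin : C.Finite := Set.toFinite C
  set s : Finset V := hfin.toFinset with hs
  have hmem : ∀ {z}, z ∈ s ↔ G.Reachable u z := fun {z} => by
    rw [hs, Set.Finite.mem_toFinset]; exact Iff.rfl
  have hcoe : (↑s : Set V) = C := hfin.coe_toFinset
  have hA : ∀ a ∈ s, ∀ b ∈ s, (res G ↑s).Reachable a b := by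
    intro a ha b hb
    obtain ⟨p⟩ := (hmem.mp ha).symm.trans (hmem.mp hb)
    rw [hcoe]
    exact lift_walk p (hmem.mp ha)
  by_cases hB : ∀ a ∈ s, ∀ b ∈ s, (res Gᶜ ↑s).Reachable a b
  · have hlt : 1 < s.card := Finset.one_lt_card.mpr
      ⟨u, hmem.mpr (Reachable.refl u), w₀, hmem.mpr hw₀, hw₀ne.symm⟩
    obtain ⟨a, b, c, d, hp⟩ := seinsche G s.card s rfl hlt hA hB
    exact (okay_no_p4 hok hp).elim
  · push_neg at hB
    obtain ⟨a, ha, b, hb, hnr⟩ := hB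
    set A : Set V := {x | x ∈ C ∧ (res Gᶜ ↑s).Reachable a x} with hAdef
    have key : ∀ x ∈ A, ∀ y, y ∈ C → y ∉ A → G.Adj x y := by
      intro x hx y hyC hyA
      have hxs : x ∈ s := hmem.mpr hx.1
      have hys : y ∈ s := hmem.mpr hyC
      have hne : x ≠ y := by rintro rfl; exact hyA hx
      by_contra hadj
      refine hyA ⟨hyC, hx.2.trans (Adj.reachable ?_)⟩
      exact ⟨(compl_adj G x y).mpr ⟨hne, hadj⟩, Finset.mem_coe.mpr hxs,
        Finset.mem_coe.mpr hys⟩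
    have haA : a ∈ A := ⟨hmem.mp ha, Reachable.refl a⟩
    have hbC : b ∈ C := hmem.mp hb
    have hbA : b ∉ A := fun h => hnr h.2
    by_cases hsub : ∀ x ∈ A, ∀ y ∈ A, x = y
    · refine ⟨a, haA.1, ?_⟩
      intro z hz hne
      exact key a haA z hz (fun h => hne (hsub z h a haA))
    · push_neg at hsub
      obtain ⟨x1, hx1, x2, hx2, hne12⟩ := hsub
      refine ⟨b, hbC, ?_⟩
      intro z hz hneb
      have hzA : z ∈ A := by
        by_contra hzA
        exact (hok x1 z x2 b (key x1 hx1 z hz hzA) (key x2 hx2 z hz hzA).symm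
          (key x2 hx2 b hbC hbA) hne12 hneb).1 (key x1 hx1 b hbC hbA)
      exact (key z hzA b hbC hbA).symm

/-- The surgery graph: delete all edges at `vD`, join `vC` to the component of `vD`. -/
def swapG (G : SimpleGraph V) (vC vD : V) : SimpleGraph V where
  Adj x y := x ≠ y ∧ ((G.Adj x y ∧ x ≠ vD ∧ y ≠ vD) ∨
    (x = vC ∧ G.Reachable vD y) ∨ (y = vC ∧ G.Reachable vD x))
  symm := ⟨by
    rintro x y ⟨hne, h⟩
    refine ⟨hne.symm, ?_⟩
    rcases h with ⟨h1, h2, h3⟩ | ⟨h1, h2⟩ | ⟨h1, h2⟩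
    · exact Or.inl ⟨h1.symm, h3, h2⟩
    · exact Or.inr (Or.inr ⟨h1, h2⟩)
    · exact Or.inr (Or.inl ⟨h1, h2⟩)⟩
  loopless := ⟨fun x h => h.1 rfl⟩

lemma swapG_adj {G : SimpleGraph V} {vC vD x y : V} :
    (swapG G vC vD).Adj x y ↔ x ≠ y ∧ ((G.Adj x y ∧ x ≠ vD ∧ y ≠ vD) ∨
    (x = vC ∧ G.Reachable vD y) ∨ (y = vC ∧ G.Reachable vD x)) := Iff.rfl

lemma swap_okay {G : SimpleGraph V} (hok : Okay G) (vC vD : V)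
    (hC : ∀ z, G.Reachable vC z → z ≠ vC → G.Adj vC z)
    (hD : ∀ z, G.Reachable vD z → z ≠ vD → G.Adj vD z)
    (hCD : ¬ G.Reachable vC vD) : Okay (swapG G vC vD) := by
  set H := swapG G vC vD with hH
  have hDC : ¬ G.Reachable vD vC := fun h => hCD h.symm
  have hCne : vC ≠ vD := fun h => hCD (h ▸ Reachable.refl vC)
  have nD : ∀ {y}, H.Adj vD y → y = vC := by
    rintro y ⟨hne, ⟨_, h2, _⟩ | ⟨h1, _⟩ | ⟨h1, _⟩⟩
    · exact absurd rfl h2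
    · exact absurd h1 hCne.symm
    · exact h1
  have hGH : ∀ {a b}, G.Adj a b → a ≠ vD → b ≠ vD → H.Adj a b :=
    fun {a b} h ha hb => ⟨h.ne, Or.inl ⟨h, ha, hb⟩⟩
  have hedge : ∀ {a b}, H.Adj a b → a ≠ vC → b ≠ vC → G.Adj a b := by
    rintro a b ⟨hne, ⟨h1, _, _⟩ | ⟨h1, _⟩ | ⟨h1, _⟩⟩ ha hb
    · exact h1
    · exact absurd h1 ha
    · exact absurd h1 hb
  have hCadj : ∀ {y}, H.Adj vC y → G.Adj vC y ∨ G.Reachable vD y := by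
    rintro y ⟨hne, ⟨h1, _, _⟩ | ⟨_, h2⟩ | ⟨h1, _⟩⟩
    · exact Or.inl h1
    · exact Or.inr h2
    · exact absurd h1.symm hne
  have hDmem : ∀ {x y}, G.Reachable vD x → G.Adj x y → G.Reachable vD y :=
    fun hx h => hx.trans h.reachable
  have hCmem : ∀ {x y}, G.Reachable vC x → G.Adj x y → G.Reachable vC y :=
    fun hx h => hx.trans h.reachable
  have hDnC : ∀ {y}, G.Reachable vD y → y ≠ vC := fun hy h => hDC (h ▸ hy)
  have hCnD : ∀ {y}, G.Reachable vC y → y ≠ vD := fun hy h => hCD (h ▸ hy)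
  have hHCD : ∀ {y}, G.Reachable vD y → H.Adj vC y :=
    fun {y} h => ⟨Ne.symm (hDnC h), Or.inr (Or.inl ⟨rfl, h⟩)⟩
  have hHC : ∀ {y}, G.Reachable vC y → y ≠ vC → H.Adj vC y :=
    fun {y} h hne => hGH (hC _ h hne) hCne (hCnD h)
  intro x1 x2 x3 x4 h12 h23 h34 hne13 hne24
  have key1 : ¬ H.Adj x1 x4 := by
    intro h14
    have n1 : x1 ≠ vD := by
      rintro rfl; exact hne24 ((nD h12).trans (nD h14).symm)
    have n2 : x2 ≠ vD := by
      rintro rfl; exact hne13 ((nD h12.symm).trans (nD h23).symm)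
    have n3 : x3 ≠ vD := by
      rintro rfl; exact hne24 ((nD h23.symm).trans (nD h34).symm)
    have n4 : x4 ≠ vD := by
      rintro rfl; exact hne13 ((nD h14.symm).trans (nD h34.symm).symm)
    have CYC : ∀ y2 y3 y4, H.Adj vC y2 → H.Adj y2 y3 → H.Adj y3 y4 → H.Adj vC y4 →
        vC ≠ y3 → y2 ≠ y4 → y2 ≠ vD → y3 ≠ vD → y4 ≠ vD → False := by
      intro y2 y3 y4 a12 a23 a34 a14 hne3 hne24' m2 m3 m4
      have hy2C : y2 ≠ vC := a12.ne.symm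
      have hy4C : y4 ≠ vC := a14.ne.symm
      have g23 : G.Adj y2 y3 := hedge a23 hy2C (Ne.symm hne3)
      have g34 : G.Adj y3 y4 := hedge a34 (Ne.symm hne3) hy4C
      by_cases hy3 : G.Reachable vD y3
      · exact (hok vD y2 y3 y4 (hD y2 (hDmem hy3 g23.symm) m2) g23 g34
          (Ne.symm m3) hne24').1 (hD y4 (hDmem hy3 g34) m4)
      · rcases hCadj a12 with hg | hg
        · have hy4R : G.Reachable vC y4 := hCmem (hCmem hg.reachable g23) g34
          exact (hok vC y2 y3 y4 hg g23 g34 hne3 hne24').1 (hC y4 hy4R hy4C)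
        · exact hy3 (hDmem hg g23)
    by_cases c1 : x1 = vC
    · subst c1; exact CYC x2 x3 x4 h12 h23 h34 h14 hne13 hne24 n2 n3 n4
    by_cases c2 : x2 = vC
    · subst c2
      exact CYC x3 x4 x1 h23 h34 h14.symm h12.symm hne24 hne13.symm n3 n4 n1
    by_cases c3 : x3 = vC
    · subst c3
      exact CYC x4 x1 x2 h34 h14.symm h12 h23.symm hne13.symm hne24.symm n4 n1 n2
    by_cases c4 : x4 = vC
    · subst c4
      exact CYC x1 x2 x3 h14.symm h12 h23 h34.symm hne24.symm hne13 n1 n2 n3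
    exact (hok x1 x2 x3 x4 (hedge h12 c1 c2) (hedge h23 c2 c3) (hedge h34 c3 c4)
      hne13 hne24).1 (hedge h14 c1 c4)
  refine ⟨key1, ?_⟩
  intro hne14
  by_contra hcon
  push_neg at hcon
  obtain ⟨hn13, hn24⟩ := hcon
  by_cases d2 : x2 = vD
  · subst d2; exact hne13 ((nD h12.symm).trans (nD h23).symm)
  by_cases d3 : x3 = vD
  · subst d3; exact hne24 ((nD h23.symm).trans (nD h34).symm)
  by_cases d1 : x1 = vD
  · subst d1
    have h2C : x2 = vC := nD h12
    subst h2C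
    have hx3C : x3 ≠ x2 := h23.ne.symm
    have hx4C : x4 ≠ x2 := Ne.symm hne24
    have g34 : G.Adj x3 x4 := hedge h34 hx3C hx4C
    rcases hCadj h23 with hg | hg
    · exact hn24 (hHC (hCmem hg.reachable g34) hx4C)
    · exact hn24 (hHCD (hDmem hg g34))
  by_cases d4 : x4 = vD
  · subst d4
    have h3C : x3 = vC := nD h34.symm
    subst h3C
    have hx2C : x2 ≠ x3 := h23.ne
    have hx1C : x1 ≠ x3 := hne13
    have g12 : G.Adj x1 x2 := hedge h12 hx1C hx2C
    rcases hCadj h23.symm with hg | hg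
    · exact hn13 ((hHC (hCmem hg.reachable g12.symm) hx1C).symm)
    · exact hn13 ((hHCD (hDmem hg g12.symm)).symm)
  by_cases c1 : x1 = vC
  · subst c1
    have hx2C : x2 ≠ x1 := h12.ne.symm
    have hx3C : x3 ≠ x1 := Ne.symm hne13
    have g23 : G.Adj x2 x3 := hedge h23 hx2C hx3C
    rcases hCadj h12 with hg | hg
    · exact hn13 (hHC (hCmem hg.reachable g23) hx3C)
    · exact hn13 (hHCD (hDmem hg g23))
  by_cases c4 : x4 = vC
  · subst c4
    have hx3C : x3 ≠ x4 := h34.ne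
    have hx2C : x2 ≠ x4 := hne24
    have g23 : G.Adj x2 x3 := hedge h23 hx2C hx3C
    rcases hCadj h34.symm with hg | hg
    · exact hn24 ((hHC (hCmem hg.reachable g23.symm) hx2C).symm)
    · exact hn24 ((hHCD (hDmem hg g23.symm)).symm)
  by_cases c2 : x2 = vC
  · subst c2
    have hx3C : x3 ≠ x2 := h23.ne.symm
    have g34 : G.Adj x3 x4 := hedge h34 hx3C c4
    rcases hCadj h23 with hg | hg
    · exact hn24 (hHC (hCmem hg.reachable g34) c4)
    · exact hn24 (hHCD (hDmem hg g34))
  by_cases c3 : x3 = vC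
  · subst c3
    have hx2C : x2 ≠ x3 := h23.ne
    have g12 : G.Adj x1 x2 := hedge h12 c1 hx2C
    rcases hCadj h23.symm with hg | hg
    · exact hn13 ((hHC (hCmem hg.reachable g12.symm) c1).symm)
    · exact hn13 ((hHCD (hDmem hg g12.symm)).symm)
  rcases (hok x1 x2 x3 x4 (hedge h12 c1 c2) (hedge h23 c2 c3) (hedge h34 c3 c4)
    hne13 hne24).2 hne14 with h | h
  · exact hn13 (hGH h d1 d3)
  · exact hn24 (hGH h d2 d4)

lemma swap_card [Fintype V] {G : SimpleGraph V} (vC vD : V)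
    (hD : ∀ z, G.Reachable vD z → z ≠ vD → G.Adj vD z)
    (hCD : ¬ G.Reachable vC vD) :
    (swapG G vC vD).edgeSet.ncard = G.edgeSet.ncard + 1 := by
  classical
  set D : Set V := {z | G.Reachable vD z} with hDdef
  set E0 : Set (Sym2 V) := {e | e ∈ G.edgeSet ∧ vD ∉ e} with hE0
  set S1 : Set (Sym2 V) := (fun z => s(vD, z)) '' (D \ {vD}) with hS1
  set S2 : Set (Sym2 V) := (fun z => s(vC, z)) '' D with hS2
  have hDC : ¬ G.Reachable vD vC := fun h => hCD h.symm
  have hvDD : vD ∈ D := Reachable.refl vD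
  have hGsplit : G.edgeSet = E0 ∪ S1 := by
    ext e
    induction e using Sym2.ind with
    | _ x y =>
      simp only [Set.mem_union, hE0, hS1, Set.mem_setOf_eq, Set.mem_image,
        mem_edgeSet, Set.mem_diff, Set.mem_singleton_iff, Sym2.mem_iff, hDdef]
      constructor
      · intro h
        by_cases hm : vD = x ∨ vD = y
        · rcases hm with rfl | rfl
          · exact Or.inr ⟨y, ⟨h.reachable, h.ne.symm⟩, rfl⟩
          · exact Or.inr ⟨x, ⟨h.symm.reachable, h.ne⟩, Sym2.eq_swap⟩
        · exact Or.inl ⟨h, hm⟩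
      · rintro (⟨h, _⟩ | ⟨z, ⟨hz, hzne⟩, hze⟩)
        · exact h
        · have hadj : G.Adj vD z := hD z hz hzne
          rcases Sym2.eq_iff.mp hze with ⟨h1, h2⟩ | ⟨h1, h2⟩
          · rw [← h1, ← h2]; exact hadj
          · rw [← h1, ← h2]; exact hadj.symm
  have hHsplit : (swapG G vC vD).edgeSet = E0 ∪ S2 := by
    ext e
    induction e using Sym2.ind with
    | _ x y =>
      rw [Set.mem_union, mem_edgeSet, swapG_adj]
      constructor
      · rintro ⟨hne, ⟨h1, h2, h3⟩ | ⟨rfl, h2⟩ | ⟨rfl, h2⟩⟩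
        · refine Or.inl ?_
          rw [hE0, Set.mem_setOf_eq]
          refine ⟨(G.mem_edgeSet).mpr h1, ?_⟩
          rw [Sym2.mem_iff]
          rintro (rfl | rfl)
          · exact h2 rfl
          · exact h3 rfl
        · exact Or.inr ⟨y, h2, rfl⟩
        · exact Or.inr ⟨x, h2, Sym2.eq_swap⟩
      · rintro (he | ⟨z, hz, hze⟩)
        · rw [hE0, Set.mem_setOf_eq, Sym2.mem_iff] at he
          obtain ⟨he1, he2⟩ := he
          push_neg at he2
          have h := (G.mem_edgeSet).mp he1
          exact ⟨h.ne, Or.inl ⟨h, fun hh => he2.1 hh.symm, fun hh => he2.2 hh.symm⟩⟩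
        · have hznC : z ≠ vC := fun hh => hDC (hh ▸ hz)
          rcases Sym2.eq_iff.mp hze with ⟨h1, h2⟩ | ⟨h1, h2⟩
          · rw [← h1, ← h2]
            exact ⟨hznC.symm, Or.inr (Or.inl ⟨rfl, hz⟩)⟩
          · rw [← h1, ← h2]
            exact ⟨hznC, Or.inr (Or.inr ⟨rfl, hz⟩)⟩
  have hd1 : Disjoint E0 S1 := by
    rw [Set.disjoint_left]
    rintro e he ⟨z, hz, rfl⟩
    rw [hE0, Set.mem_setOf_eq] at he
    exact he.2 (Sym2.mem_mk_left vD z)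
  have hd2 : Disjoint E0 S2 := by
    rw [Set.disjoint_left]
    rintro e he ⟨z, hz, rfl⟩
    rw [hE0, Set.mem_setOf_eq] at he
    exact hDC (hz.trans ((G.mem_edgeSet).mp he.1).symm.reachable)
  have hcard1 : S1.ncard = (D \ {vD}).ncard := Set.ncard_image_of_injOn (by
    intro a _ b _ h; exact Sym2.congr_right.mp h)
  have hcard2 : S2.ncard = D.ncard := Set.ncard_image_of_injOn (by
    intro a _ b _ h; exact Sym2.congr_right.mp h)
  have hDcard : D.ncard = (D \ {vD}).ncard + 1 := by
    have hins : insert vD (D \ {vD}) = D := by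
      rw [Set.insert_diff_singleton]
      exact Set.insert_eq_self.mpr hvDD
    conv_lhs => rw [← hins]
    rw [Set.ncard_insert_of_notMem (by simp)]
  rw [hHsplit, hGsplit, Set.ncard_union_eq hd2 (Set.toFinite _) (Set.toFinite _),
    Set.ncard_union_eq hd1 (Set.toFinite _) (Set.toFinite _), hcard1, hcard2, hDcard]
  omega

end Aux

theorem K22_free_extremal_dominating_vertex {V : Type*} [Fintype V] (G : SimpleGraph V)
    (hcard : 2 ≤ Fintype.card V) (hG : IsCograph G) (hfree : ¬ Contains (KBip 2 2) G)
    (hmax : ∀ H : SimpleGraph V, IsCograph H → ¬ Contains (KBip 2 2) H →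
      Nat.card H.edgeSet ≤ Nat.card G.edgeSet) :
    ∃ v : V, (∀ w : V, w ≠ v → G.Adj v w) ∧
      ∀ w : V, w ≠ v → Nat.card {u : V | u ≠ v ∧ G.Adj w u} ≤ 1 := by
  classical
  have hok : Okay G := okay_mk G hG hfree
  by_cases hconn : ∀ x y : V, G.Reachable x y
  · have hne : Nonempty V := Fintype.card_pos_iff.mp (by omega)
    obtain ⟨u⟩ := hne
    obtain ⟨v, hv, hdom⟩ := compdom hok u
    refine ⟨v, fun w hw => hdom w (hconn u w) hw, ?_⟩
    intro w hw
    have hsub : ∀ x ∈ {u' : V | u' ≠ v ∧ G.Adj w u'},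
        ∀ y ∈ {u' : V | u' ≠ v ∧ G.Adj w u'}, x = y := by
      rintro x ⟨hx1, hx2⟩ y ⟨hy1, hy2⟩
      by_contra hxy
      exact (hok w x v y hx2 (hdom x (hconn u x) hx1).symm (hdom y (hconn u y) hy1)
        hw hxy).1 hy2
    exact (Set.ncard_le_one (Set.toFinite _)).mpr hsub
  · exfalso
    push_neg at hconn
    obtain ⟨p, q, hpq⟩ := hconn
    obtain ⟨vC, hpC, hdomC⟩ := compdom hok p
    obtain ⟨vD, hqD, hdomD⟩ := compdom hok q
    have hCD : ¬ G.Reachable vC vD := fun h => hpq (hpC.trans (h.trans hqD.symm))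
    have hC' : ∀ z, G.Reachable vC z → z ≠ vC → G.Adj vC z :=
      fun z hz => hdomC z (hpC.trans hz)
    have hD' : ∀ z, G.Reachable vD z → z ≠ vD → G.Adj vD z :=
      fun z hz => hdomD z (hqD.trans hz)
    have hokH := swap_okay hok vC vD hC' hD' hCD
    have hle := hmax _ (cograph_of_okay _ hokH) (free_of_okay _ hokH)
    have hcardH := swap_card vC vD hD' hCD
    have e1 : Nat.card (swapG G vC vD).edgeSet = (swapG G vC vD).edgeSet.ncard := rfl
    have e2 : Nat.card G.edgeSet = G.edgeSet.ncard := rfl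
    rw [e1, e2, hcardH] at hle
    omega
end
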